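/- Let I=(V,E,𝔗,d) be a Steiner Forest instance, F a feasible solution, and A a feasible tree solution with V[A]=V[F] that is edge/set swap-optimal with respect to F and the potential φ. Let S ∈ 𝔖∖{S_u} be an equivalence class of safe edges with edges e_1,…,e_{ℓ(S)}, and let f ∈ F be an edge closing a cycle in A that contains S. Then d_f ≥ (1/3)·(Σ_{i=1}^{ℓ(S)} d_{e_i} − Σ_{i∈In_S} w(E_{S,i})). -/

import Mathlib

open Finset

attribute [local instance] Classical.propDecidable

variable {V : Type*} [Fintype V] [DecidableEq V]

/-- The simple graph on `V` induced by a finite set of (undirected) edges. -/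
def graphOf (F : Finset (Sym2 V)) : SimpleGraph V where
  Adj u v := u ≠ v ∧ s(u, v) ∈ F
  symm := by
    constructor
    intro u v h
    refine ⟨Ne.symm h.1, ?_⟩
    rw [Sym2.eq_swap]
    exact h.2
  loopless := by constructor; intro v h; exact h.1 rfl

/-- The set of vertices incident to at least one edge of `F` (denoted `V[F]` in the paper). -/
def supp (F : Finset (Sym2 V)) : Set V := {v | ∃ e ∈ F, v ∈ e}

/-- A Steiner forest `F` is feasible for the terminal pairs `T` if it connects every pair. -/
def Feasible (F : Finset (Sym2 V)) (T : Finset (V × V)) : Prop :=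
  ∀ p ∈ T, (graphOf F).Reachable p.1 p.2

/-- Total edge cost `d(F)`. -/
def cost (d : Sym2 V → ℝ) (F : Finset (Sym2 V)) : ℝ := ∑ e ∈ F, d e

/-- `A` is a tree (on its vertex support): loopless edges, acyclic, connected on `V[A]`. -/
def IsTreeSol (A : Finset (Sym2 V)) : Prop :=
  (∀ e ∈ A, ¬ e.IsDiag) ∧ (graphOf A).IsAcyclic ∧
    ∀ u ∈ supp A, ∀ v ∈ supp A, (graphOf A).Reachable u v

/-- Shortest-path distance between `u` and `v` in the graph with edge set `Eall`
and edge lengths `d`. -/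
noncomputable def wdist (Eall : Finset (Sym2 V)) (d : Sym2 V → ℝ) (u v : V) : ℝ :=
  ⨅ p : (graphOf Eall).Walk u v, (p.edges.map d).sum

/-- Width of a vertex set `W`: the largest shortest-path distance of a terminal pair
whose two members both lie in `W`. -/
noncomputable def widthSet (Eall : Finset (Sym2 V)) (d : Sym2 V → ℝ) (T : Finset (V × V))
    (W : Set V) : ℝ :=
  sSup {x : ℝ | ∃ p ∈ T, p.1 ∈ W ∧ p.2 ∈ W ∧ x = wdist Eall d p.1 p.2}

/-- Total width `w(F)`: the sum of the widths of the connected components of `F`. -/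
noncomputable def totalWidth (Eall : Finset (Sym2 V)) (d : Sym2 V → ℝ) (T : Finset (V × V))
    (F : Finset (Sym2 V)) : ℝ :=
  ∑ᶠ c : (graphOf F).ConnectedComponent, widthSet Eall d T c.supp

/-- The potential `φ(F) = d(F) + w(F)`. -/
noncomputable def phi (Eall : Finset (Sym2 V)) (d : Sym2 V → ℝ) (T : Finset (V × V))
    (F : Finset (Sym2 V)) : ℝ :=
  cost d F + totalWidth Eall d T F

/-- Some edge of `F` leaves the vertex set `W`. -/
def leavesSet (F : Finset (Sym2 V)) (W : Set V) : Prop :=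
  ∃ g ∈ F, ∃ x y : V, g = s(x, y) ∧ x ∈ W ∧ y ∉ W

/-- `T_{e,f}`: the connected component of `A ∖ {e,f}` containing the interior of the
unique `e`–`f` path of the tree `A`; equivalently, the component containing an endpoint
of `e` together with an endpoint of `f`. -/
def midComp (A : Finset (Sym2 V)) (e f : Sym2 V) : Set V :=
  {v | ∃ x ∈ e, ∃ y ∈ f,
    (graphOf (A \ {e, f})).Reachable x y ∧ (graphOf (A \ {e, f})).Reachable x v}

/-- `e` and `f` are compatible w.r.t. `F` (`e ~cp f`). -/
def Compatible (A F : Finset (Sym2 V)) (e f : Sym2 V) : Prop :=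
  e = f ∨ ¬ leavesSet F (midComp A e f)

/-- `e` is safe: some `F`-edge crosses between the two components of `A ∖ {e}`. -/
def Safe (A F : Finset (Sym2 V)) (e : Sym2 V) : Prop :=
  ∃ g ∈ F, ∃ x y : V, g = s(x, y) ∧ x ≠ y ∧ ¬ (graphOf (A.erase e)).Reachable x y

/-- `e` is essential: removing it from `A` destroys feasibility. -/
def Essential (A : Finset (Sym2 V)) (T : Finset (V × V)) (e : Sym2 V) : Prop :=
  ¬ Feasible (A.erase e) T

/-- The compatibility class of the edge `e` of `A`. -/
noncomputable def cls (A F : Finset (Sym2 V)) (e : Sym2 V) : Finset (Sym2 V) :=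
  A.filter (fun f => Compatible A F e f)

/-- `S_u`: the set of unsafe edges of `A`. -/
noncomputable def unsafeCls (A F : Finset (Sym2 V)) : Finset (Sym2 V) :=
  A.filter (fun e => ¬ Safe A F e)

/-- `𝔖`: the set of compatibility classes of edges of `A`. -/
noncomputable def classes (A F : Finset (Sym2 V)) : Finset (Finset (Sym2 V)) :=
  A.image (cls A F)

/-- `e` lies on the fundamental cycle closed by adding the edge `f` to the tree `A`. -/
def onFundCycle (A : Finset (Sym2 V)) (f e : Sym2 V) : Prop :=
  e ∈ A ∧ ∀ x y : V, f = s(x, y) →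
    (graphOf A).Reachable x y ∧ ¬ (graphOf (A.erase e)).Reachable x y

/-- Edge/edge swap optimality of `A` w.r.t. added edges from `Eadd` and objective `obj`:
no swap that adds an edge `f ∈ Eadd` and removes one edge of the cycle it closes,
keeping feasibility, strictly decreases the objective. -/
def EdgeEdgeSwapOptimal (Eadd : Finset (Sym2 V)) (T : Finset (V × V))
    (obj : Finset (Sym2 V) → ℝ) (A : Finset (Sym2 V)) : Prop :=
  ∀ f ∈ Eadd, ∀ e, onFundCycle A f e →
    Feasible (A.erase e ∪ {f}) T → obj A ≤ obj (A.erase e ∪ {f})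

/-- Edge/set swap optimality of `A` w.r.t. added edges from `Eadd` and objective `obj`:
no swap that adds an edge `f ∈ Eadd` and removes a set `S` of edges of the cycle it closes,
keeping feasibility, strictly decreases the objective. -/
def EdgeSetSwapOptimal (Eadd : Finset (Sym2 V)) (T : Finset (V × V))
    (obj : Finset (Sym2 V) → ℝ) (A : Finset (Sym2 V)) : Prop :=
  ∀ f ∈ Eadd, ∀ S ⊆ A, (∀ e ∈ S, onFundCycle A f e) →
    Feasible ((A \ S) ∪ {f}) T → obj A ≤ obj ((A \ S) ∪ {f})

/-- Removing swap optimality: deleting any (feasibility preserving) edge set from `A`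
does not strictly decrease the objective. -/
def RemovingSwapOptimal (T : Finset (V × V))
    (obj : Finset (Sym2 V) → ℝ) (A : Finset (Sym2 V)) : Prop :=
  ∀ S ⊆ A, Feasible (A \ S) T → obj A ≤ obj (A \ S)

/-- Path/set swap optimality of `A`: for vertices `u, v` in the same component of `A`,
adding a set `P ⊆ Eadd` of edges (along a `u`–`v` connection) and removing a set `S` of
edges of the component of `u`, in a way that keeps `u,v` connected and the solution
feasible, does not strictly decrease the objective. -/
def PathSetSwapOptimal (Eadd : Finset (Sym2 V)) (T : Finset (V × V))
    (obj : Finset (Sym2 V) → ℝ) (A : Finset (Sym2 V)) : Prop :=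
  ∀ u v : V, (graphOf A).Reachable u v →
    ∀ P : Finset (Sym2 V), P ⊆ Eadd → ∀ S ⊆ A,
      (∀ e ∈ S, ∃ x ∈ e, (graphOf A).Reachable u x) →
      (graphOf ((A \ S) ∪ P)).Reachable u v →
      Feasible ((A \ S) ∪ P) T → obj A ≤ obj ((A \ S) ∪ P)

/-- A connected component `c` of `A ∖ S` is an *inner* component for the class `S`
if it touches (at least) two distinct edges of `S`. -/
def innerComp (A S : Finset (Sym2 V)) (c : (graphOf (A \ S)).ConnectedComponent) : Prop :=
  ∃ e ∈ S, ∃ e' ∈ S, e ≠ e' ∧ (∃ x ∈ e, (graphOf (A \ S)).connectedComponentMk x = c) ∧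
    ∃ y ∈ e', (graphOf (A \ S)).connectedComponentMk y = c

/-- The sum of the widths of the inner components `E_{S,i}`, `i ∈ In_S`, of the class `S`. -/
noncomputable def innerWidthSum (Eall : Finset (Sym2 V)) (d : Sym2 V → ℝ) (T : Finset (V × V))
    (A S : Finset (Sym2 V)) : ℝ :=
  ∑ᶠ c : (graphOf (A \ S)).ConnectedComponent,
    if innerComp A S c then widthSet Eall d T c.supp else 0

/-- `index(E')` for a vertex set `W`: the largest index `i` (in the enumeration `tp` of the
terminal pairs by nondecreasing distance) of a terminal pair lying entirely inside `W`. -/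
noncomputable def idxOf {nt : ℕ} (tp : Fin nt → V × V) (W : Set V) : ℕ :=
  sSup {i : ℕ | ∃ h : i < nt, (tp ⟨i, h⟩).1 ∈ W ∧ (tp ⟨i, h⟩).2 ∈ W}

/-- The finite vertex support of an edge set. -/
def suppF (B : Finset (Sym2 V)) : Finset V :=
  Finset.univ.filter (fun v => ∃ e ∈ B, v ∈ e)

/-- `e` crosses between two different connected components of `A`. -/
def crossingEdge (A : Finset (Sym2 V)) (e : Sym2 V) : Prop :=
  ∀ x y : V, e = s(x, y) → ¬ (graphOf A).Reachable x y

/-- The components of `A` touched by the edge set `B`, i.e. the nodes of `G_A`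
incident to `B`. -/
noncomputable def touched (A B : Finset (Sym2 V)) :
    Finset ((graphOf A).ConnectedComponent) :=
  (suppF B).image ((graphOf A).connectedComponentMk)

/-- `B` is (the edge set of) a tree in the contracted multigraph `G_A`: all its edges cross
between components of `A`, it is connected (through the components of `A` it touches), and
it has one edge less than the number of components it touches. -/
def IsGATree (A B : Finset (Sym2 V)) : Prop :=
  (∀ e ∈ B, crossingEdge A e) ∧ (touched A B).card = B.card + 1 ∧
    ∀ x ∈ suppF B, ∀ y ∈ suppF B, (graphOf (A ∪ B)).Reachable x y

/-- `A` is `c`-approximate connecting move optimal: for every tree `B` in `G_A` (with edges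
taken from `Emoves`), the total width of the components it connects, minus the largest of
these widths, is at most `c` times the length of the tree. -/
def ConnApproxOptimal (Emoves Eall : Finset (Sym2 V)) (d : Sym2 V → ℝ) (T : Finset (V × V))
    (c : ℝ) (A : Finset (Sym2 V)) : Prop :=
  ∀ B ⊆ Emoves, IsGATree A B →
    (∑ t ∈ touched A B, widthSet Eall d T t.supp)
      - (⨆ t ∈ touched A B, widthSet Eall d T t.supp) ≤ c * ∑ e ∈ B, d e

set_option linter.unusedSectionVars false
set_option linter.unusedVariables false

lemma graphOf_le {B C : Finset (Sym2 V)} (h : B ⊆ C) : graphOf B ≤ graphOf C :=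
  fun _ _ hadj => ⟨hadj.1, h hadj.2⟩

lemma graphOf_adj {B : Finset (Sym2 V)} {u v : V} :
    (graphOf B).Adj u v ↔ u ≠ v ∧ s(u, v) ∈ B := Iff.rfl

lemma mem_edgeSet_graphOf {B : Finset (Sym2 V)} {g : Sym2 V} :
    g ∈ (graphOf B).edgeSet ↔ ¬ g.IsDiag ∧ g ∈ B := by
  induction g using Sym2.ind with
  | _ a b => simp [SimpleGraph.mem_edgeSet, graphOf_adj, Sym2.mk_isDiag_iff]

lemma reach_of_adj_reach {G G' : SimpleGraph V}
    (h : ∀ a b, G.Adj a b → G'.Reachable a b) {u v : V} (hr : G.Reachable u v) :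
    G'.Reachable u v := by
  obtain ⟨p⟩ := hr
  induction p with
  | nil => exact .refl _
  | cons hadj p ih => exact (h _ _ hadj).trans ih

lemma exists_cross_aux {B S' : Finset (Sym2 V)} :
    ∀ {u v : V} (p : (graphOf B).Walk u v), p.IsPath →
      ¬ (graphOf (B \ S')).Reachable u v →
      ∃ e ∈ S', ∃ a b : V, e = s(a, b) ∧ (graphOf (B \ S')).Reachable u a ∧
        (graphOf (B.erase e)).Reachable b v := by
  intro u v p
  induction p with
  | nil => intro _ hn; exact absurd (.refl _) hn
  | @cons u w v h p ih =>
    intro hp hn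
    by_cases hS : s(u, w) ∈ S'
    · refine ⟨s(u, w), hS, u, w, rfl, .refl u, ?_⟩
      refine ⟨p.transfer _ ?_⟩
      intro g hg
      have hgB := p.edges_subset_edgeSet hg
      rw [mem_edgeSet_graphOf] at hgB
      have hne : g ≠ s(u, w) := by
        rintro rfl
        exact ((SimpleGraph.Walk.cons_isPath_iff h p).mp hp).2
          (p.fst_mem_support_of_mem_edges hg)
      rw [mem_edgeSet_graphOf]
      exact ⟨hgB.1, Finset.mem_erase.mpr ⟨hne, hgB.2⟩⟩
    · have hAdj : (graphOf (B \ S')).Adj u w := ⟨h.1, Finset.mem_sdiff.mpr ⟨h.2, hS⟩⟩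
      have hn' : ¬ (graphOf (B \ S')).Reachable w v := fun hr => hn (hAdj.reachable.trans hr)
      obtain ⟨e, he, a, b, hab, h1, h2⟩ :=
        ih ((SimpleGraph.Walk.cons_isPath_iff h p).mp hp).1 hn'
      exact ⟨e, he, a, b, hab, hAdj.reachable.trans h1, h2⟩

lemma exists_cross {B S' : Finset (Sym2 V)} {u v : V}
    (h : (graphOf B).Reachable u v) (hn : ¬ (graphOf (B \ S')).Reachable u v) :
    ∃ e ∈ S', ∃ a b : V, e = s(a, b) ∧ (graphOf (B \ S')).Reachable u a ∧
      (graphOf (B.erase e)).Reachable b v := by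
  obtain ⟨p0⟩ := h
  exact exists_cross_aux p0.bypass p0.bypass_isPath hn

lemma not_reach_erase_of_acyclic {A : Finset (Sym2 V)}
    (hacy : (graphOf A).IsAcyclic) {a b : V} (hab : s(a, b) ∈ A) (hne : a ≠ b) :
    ¬ (graphOf (A.erase s(a, b))).Reachable a b := by
  have hbr := (SimpleGraph.isAcyclic_iff_forall_adj_isBridge.mp hacy)
    (show (graphOf A).Adj a b from ⟨hne, hab⟩)
  rw [SimpleGraph.isBridge_iff] at hbr
  intro hr
  refine hbr (hr.mono ?_)
  intro u' v' huv
  rw [SimpleGraph.deleteEdges_adj]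
  refine ⟨⟨huv.1, Finset.mem_of_mem_erase huv.2⟩, ?_⟩
  rw [Set.mem_singleton_iff]
  exact (Finset.ne_of_mem_erase huv.2)

lemma side_total_edge {A : Finset (Sym2 V)} {j : Sym2 V} {x y v : V}
    (hxy : ¬ (graphOf (A.erase j)).Reachable x y)
    (hyxA : (graphOf A).Reachable y x)
    (hvx : (graphOf A).Reachable v x) :
    (graphOf (A.erase j)).Reachable v x ∨ (graphOf (A.erase j)).Reachable v y := by
  rw [Finset.erase_eq] at *
  by_cases h : (graphOf (A \ {j})).Reachable v x
  · exact Or.inl h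
  obtain ⟨e, he, a, b, hab, h1, h2⟩ := exists_cross hvx h
  rw [Finset.mem_singleton] at he; subst he
  rw [Finset.erase_eq] at h2
  obtain ⟨e2, he2, a2, b2, hab2, h3, h4⟩ :=
    exists_cross hyxA (fun hr => hxy hr.symm)
  rw [Finset.mem_singleton] at he2; subst he2
  rw [Finset.erase_eq] at h4
  rw [hab, Sym2.eq_iff] at hab2
  rcases hab2 with ⟨rfl, rfl⟩ | ⟨rfl, rfl⟩
  · exact Or.inr (h1.trans h3.symm)
  · exact absurd (h1.trans h4) h
lemma adj_reach_of_edge {A : Finset (Sym2 V)} {e : Sym2 V} {a b : V}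
    (h : e = s(a, b)) (hne : a ≠ b) (heA : e ∈ A) : (graphOf A).Reachable a b :=
  SimpleGraph.Adj.reachable ⟨hne, h ▸ heA⟩

lemma sdiff_pair_left {A : Finset (Sym2 V)} {e j : Sym2 V} :
    (A.erase e) \ {j} = A \ {e, j} := by
  ext g
  simp only [Finset.mem_sdiff, Finset.mem_erase, Finset.mem_singleton, Finset.mem_insert]
  tauto

lemma sdiff_pair_left' {A : Finset (Sym2 V)} {e j : Sym2 V} :
    (A.erase e).erase j = A \ {e, j} := by
  rw [Finset.erase_eq, sdiff_pair_left]

lemma sdiff_pair_subset {A : Finset (Sym2 V)} {e j : Sym2 V} :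
    A \ {e, j} ⊆ A.erase e := by
  intro g hg
  simp only [Finset.mem_sdiff, Finset.mem_insert, Finset.mem_singleton] at hg
  rw [Finset.mem_erase]
  tauto

lemma sdiff_pair_subset' {A : Finset (Sym2 V)} {e j : Sym2 V} :
    A \ {e, j} ⊆ A.erase j := by
  intro g hg
  simp only [Finset.mem_sdiff, Finset.mem_insert, Finset.mem_singleton] at hg
  rw [Finset.mem_erase]
  tauto

lemma t_lemma {A : Finset (Sym2 V)} {x y : V} {e₀ j : Sym2 V} {α₀ β₀ α β : V}
    (hsep₀ : ¬ (graphOf (A.erase e₀)).Reachable x y)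
    (hsepj : ¬ (graphOf (A.erase j)).Reachable x y)
    (hxyA : (graphOf A).Reachable x y)
    (hne : e₀ ≠ j) (he₀A : e₀ ∈ A) (hjA : j ∈ A)
    (h0 : e₀ = s(α₀, β₀)) (h1 : j = s(α, β))
    (hn0 : α₀ ≠ β₀)
    (hβ₀ : (graphOf (A.erase e₀)).Reachable β₀ y)
    (hα : (graphOf (A.erase j)).Reachable α x)
    (hβ : (graphOf (A.erase j)).Reachable β y)
    (ht : (graphOf (A.erase j)).Reachable α₀ x) :
    (graphOf (A.erase e₀)).Reachable α y := by
  by_contra hns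
  have hαA : (graphOf A).Reachable α x := hα.mono (graphOf_le (Finset.erase_subset _ _))
  have hαx : (graphOf (A.erase e₀)).Reachable α x :=
    (side_total_edge hsep₀ hxyA.symm hαA).resolve_right hns
  have hnK : ¬ (graphOf (A \ {e₀, j})).Reachable y x := fun hr =>
    hsep₀ ((hr.mono (graphOf_le sdiff_pair_subset)).symm)
  obtain ⟨m, hm, a, b, habm, hy1, hb1⟩ := exists_cross hxyA.symm hnK
  have hedge₀ : (graphOf (A.erase j)).Reachable α₀ β₀ :=
    adj_reach_of_edge h0 hn0 (Finset.mem_erase.mpr ⟨hne, he₀A⟩)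
  rw [Finset.mem_insert, Finset.mem_singleton] at hm
  rcases hm with rfl | rfl
  · have := h0.symm.trans habm
    rw [Sym2.eq_iff] at this
    rcases this with ⟨rfl, rfl⟩ | ⟨rfl, rfl⟩
    · exact hsep₀ (hb1.symm.trans hβ₀)
    · exact hsepj (((hy1.mono (graphOf_le sdiff_pair_subset')).trans hedge₀.symm).trans ht).symm
  · have := h1.symm.trans habm
    rw [Sym2.eq_iff] at this
    have hedgej : (graphOf (A.erase e₀)).Reachable α β := by
      refine adj_reach_of_edge h1 ?_ (Finset.mem_erase.mpr ⟨fun h => hne h.symm, hjA⟩)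
      rintro rfl
      exact hsepj (hα.symm.trans hβ)
    rcases this with ⟨rfl, rfl⟩ | ⟨rfl, rfl⟩
    · exact hsepj (hb1.symm.trans hβ)
    · exact hsep₀ (((hy1.mono (graphOf_le sdiff_pair_subset)).trans hedgej.symm).trans hαx).symm
lemma midComp_char {A : Finset (Sym2 V)} {x y : V} {e₀ j : Sym2 V} {α₀ β₀ α β : V}
    (hacy : (graphOf A).IsAcyclic)
    (hsep₀ : ¬ (graphOf (A.erase e₀)).Reachable x y)
    (hsepj : ¬ (graphOf (A.erase j)).Reachable x y)
    (hne : e₀ ≠ j) (he₀A : e₀ ∈ A) (hjA : j ∈ A)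
    (h0 : e₀ = s(α₀, β₀)) (h1 : j = s(α, β))
    (hn0 : α₀ ≠ β₀) (hnj : α ≠ β)
    (hα₀ : (graphOf (A.erase e₀)).Reachable α₀ x)
    (hβ₀ : (graphOf (A.erase e₀)).Reachable β₀ y)
    (hα : (graphOf (A.erase j)).Reachable α x)
    (hβ : (graphOf (A.erase j)).Reachable β y)
    (ht : (graphOf (A.erase j)).Reachable α₀ x)
    (ht' : (graphOf (A.erase e₀)).Reachable α y) :
    ∀ v : V, (v ∈ midComp A e₀ j ↔
        ((graphOf (A.erase e₀)).Reachable v y ∧ (graphOf (A.erase j)).Reachable v x)) ∧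
      ¬ ((graphOf (A.erase e₀)).Reachable v x ∧ (graphOf (A.erase j)).Reachable v y) := by
  have subK := @sdiff_pair_subset V _ _ A e₀ j
  have subK' := @sdiff_pair_subset' V _ _ A e₀ j
  have br0 : ¬ (graphOf (A.erase e₀)).Reachable α₀ β₀ := by
    rw [h0] at he₀A ⊢
    exact not_reach_erase_of_acyclic hacy he₀A hn0
  have brj : ¬ (graphOf (A.erase j)).Reachable α β := by
    rw [h1] at hjA ⊢
    exact not_reach_erase_of_acyclic hacy hjA hnj
  have hedge₀ : (graphOf (A.erase j)).Reachable α₀ β₀ :=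
    adj_reach_of_edge h0 hn0 (Finset.mem_erase.mpr ⟨hne, he₀A⟩)
  -- s1 : x ~K α₀
  have s1 : (graphOf (A \ {e₀, j})).Reachable x α₀ := by
    by_cases hc : (graphOf (A \ {e₀, j})).Reachable x α₀
    · exact hc
    exfalso
    have hc' : ¬ (graphOf ((A.erase e₀) \ {j})).Reachable x α₀ := by
      rw [sdiff_pair_left]; exact hc
    obtain ⟨m, hm, a, b, habm, hxa, hbα₀⟩ := exists_cross hα₀.symm hc'
    rw [Finset.mem_singleton] at hm; subst hm
    rw [sdiff_pair_left] at hxa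
    rw [sdiff_pair_left'] at hbα₀
    have := h1.symm.trans habm
    rw [Sym2.eq_iff] at this
    rcases this with ⟨rfl, rfl⟩ | ⟨rfl, rfl⟩
    · exact hsepj (((hbα₀.mono (graphOf_le subK')).trans ht).symm.trans hβ)
    · exact hsepj ((hxa.mono (graphOf_le subK')).trans hβ)
  -- s2 : y ~K β
  have s2 : (graphOf (A \ {e₀, j})).Reachable y β := by
    by_cases hc : (graphOf (A \ {e₀, j})).Reachable y β
    · exact hc
    exfalso
    have hc' : ¬ (graphOf ((A.erase j) \ {e₀})).Reachable y β := by
      rw [sdiff_pair_left, Finset.pair_comm]; exact hc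
    obtain ⟨m, hm, a, b, habm, hya, hbβ⟩ := exists_cross hβ.symm hc'
    rw [Finset.mem_singleton] at hm; subst hm
    rw [sdiff_pair_left, Finset.pair_comm] at hya
    rw [sdiff_pair_left', Finset.pair_comm] at hbβ
    have := h0.symm.trans habm
    rw [Sym2.eq_iff] at this
    rcases this with ⟨rfl, rfl⟩ | ⟨rfl, rfl⟩
    · exact hsepj (((hya.mono (graphOf_le subK')).trans ht).symm)
    · exact hsepj (ht.symm.trans ((hbβ.mono (graphOf_le subK')).trans hβ))
  -- s3 : β₀ ~K α
  have s3 : (graphOf (A \ {e₀, j})).Reachable β₀ α := by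
    by_cases hc : (graphOf (A \ {e₀, j})).Reachable β₀ α
    · exact hc
    exfalso
    have h' : (graphOf (A.erase e₀)).Reachable β₀ α := hβ₀.trans ht'.symm
    have hc' : ¬ (graphOf ((A.erase e₀) \ {j})).Reachable β₀ α := by
      rw [sdiff_pair_left]; exact hc
    obtain ⟨m, hm, a, b, habm, hβ₀a, hbα⟩ := exists_cross h' hc'
    rw [Finset.mem_singleton] at hm; subst hm
    rw [sdiff_pair_left] at hβ₀a
    have := h1.symm.trans habm
    rw [Sym2.eq_iff] at this
    rcases this with ⟨rfl, rfl⟩ | ⟨rfl, rfl⟩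
    · exact hc hβ₀a
    · exact hsepj (((ht.symm.trans hedge₀).trans (hβ₀a.mono (graphOf_le subK'))).trans hβ)
  have s4a : ¬ (graphOf (A \ {e₀, j})).Reachable α₀ α := fun hc =>
    br0 ((hc.trans s3.symm).mono (graphOf_le subK))
  have s4b : ¬ (graphOf (A \ {e₀, j})).Reachable α₀ β := fun hc =>
    hsep₀ (((s1.trans hc).trans s2.symm).mono (graphOf_le subK))
  have s4c : ¬ (graphOf (A \ {e₀, j})).Reachable β₀ β := fun hc =>
    brj ((s3.symm.trans hc).mono (graphOf_le subK'))
  intro v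
  constructor
  · constructor
    · rintro ⟨x', hx', y', hy', hr, hrv⟩
      rw [h0, Sym2.mem_iff] at hx'
      rw [h1, Sym2.mem_iff] at hy'
      rcases hx' with rfl | rfl <;> rcases hy' with rfl | rfl
      · exact absurd hr s4a
      · exact absurd hr s4b
      · refine ⟨(hrv.symm.mono (graphOf_le subK)).trans hβ₀, ?_⟩
        exact ((hrv.symm.mono (graphOf_le subK')).trans hedge₀.symm).trans ht
      · exact absurd hr s4c
    · rintro ⟨hvy, hvx⟩
      by_cases hc : (graphOf (A \ {e₀, j})).Reachable v β₀
      · refine ⟨β₀, ?_, α, ?_, s3, hc.symm⟩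
        · rw [h0]; exact Sym2.mem_mk_right _ _
        · rw [h1]; exact Sym2.mem_mk_left _ _
      exfalso
      have h' : (graphOf (A.erase e₀)).Reachable v β₀ := hvy.trans hβ₀.symm
      have hc' : ¬ (graphOf ((A.erase e₀) \ {j})).Reachable v β₀ := by
        rw [sdiff_pair_left]; exact hc
      obtain ⟨m, hm, a, b, habm, hva, hbβ₀⟩ := exists_cross h' hc'
      rw [Finset.mem_singleton] at hm; subst hm
      rw [sdiff_pair_left] at hva
      rw [sdiff_pair_left'] at hbβ₀
      have := h1.symm.trans habm
      rw [Sym2.eq_iff] at this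
      rcases this with ⟨rfl, rfl⟩ | ⟨rfl, rfl⟩
      · exact s4c hbβ₀.symm
      · exact hsepj (hvx.symm.trans ((hva.mono (graphOf_le subK')).trans hβ))
  · rintro ⟨hvx, hvy⟩
    have hnK : ¬ (graphOf (A \ {e₀, j})).Reachable v x := fun hr =>
      hsepj ((hr.mono (graphOf_le subK')).symm.trans hvy)
    have hc' : ¬ (graphOf ((A.erase e₀) \ {j})).Reachable v x := by
      rw [sdiff_pair_left]; exact hnK
    obtain ⟨m, hm, a, b, habm, hva, hbx⟩ := exists_cross hvx hc'
    rw [Finset.mem_singleton] at hm; subst hm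
    rw [sdiff_pair_left] at hva
    rw [sdiff_pair_left'] at hbx
    have := h1.symm.trans habm
    rw [Sym2.eq_iff] at this
    rcases this with ⟨rfl, rfl⟩ | ⟨rfl, rfl⟩
    · exact hsepj ((hbx.mono (graphOf_le subK')).symm.trans hβ)
    · have hvyK : (graphOf (A.erase e₀)).Reachable v y :=
        (hva.trans s2.symm).mono (graphOf_le subK)
      exact hsep₀ (hvx.symm.trans hvyK)
lemma mem_supp_of_edge {A : Finset (Sym2 V)} {e : Sym2 V} {a b : V}
    (h : e = s(a, b)) (heA : e ∈ A) : a ∈ supp A :=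
  ⟨e, heA, by rw [h]; exact Sym2.mem_mk_left _ _⟩

lemma midComp_xor {A : Finset (Sym2 V)} {x y : V} {e₀ j : Sym2 V}
    (hacy : (graphOf A).IsAcyclic) (hnd : ∀ e ∈ A, ¬ e.IsDiag)
    (hconn : ∀ u ∈ supp A, ∀ v ∈ supp A, (graphOf A).Reachable u v)
    (hsep₀ : ¬ (graphOf (A.erase e₀)).Reachable x y)
    (hsepj : ¬ (graphOf (A.erase j)).Reachable x y)
    (hxyA : (graphOf A).Reachable x y)
    (hne : e₀ ≠ j) (he₀A : e₀ ∈ A) (hjA : j ∈ A)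
    (hx : x ∈ supp A) :
    ∀ v ∈ supp A, (v ∈ midComp A e₀ j ↔
      (((graphOf (A.erase e₀)).Reachable v x ∧ (graphOf (A.erase j)).Reachable v y) ∨
       ((graphOf (A.erase e₀)).Reachable v y ∧ (graphOf (A.erase j)).Reachable v x))) := by
  -- labels for e₀
  obtain ⟨m, hm, α₀, β₀, h0, hxα₀, hβ₀⟩ :=
    exists_cross (S' := {e₀}) hxyA (by rw [← Finset.erase_eq]; exact hsep₀)
  rw [Finset.mem_singleton] at hm
  subst m
  rw [← Finset.erase_eq] at hxα₀
  have hα₀ : (graphOf (A.erase e₀)).Reachable α₀ x := hxα₀.symm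
  obtain ⟨m, hm, α, β, h1, hxα, hβ⟩ :=
    exists_cross (S' := {j}) hxyA (by rw [← Finset.erase_eq]; exact hsepj)
  rw [Finset.mem_singleton] at hm
  subst m
  rw [← Finset.erase_eq] at hxα
  have hα : (graphOf (A.erase j)).Reachable α x := hxα.symm
  have hn0 : α₀ ≠ β₀ := by
    intro h
    exact hnd e₀ he₀A (by rw [h0, h]; exact Sym2.mk_isDiag_iff.mpr rfl)
  have hnj : α ≠ β := by
    intro h
    exact hnd j hjA (by rw [h1, h]; exact Sym2.mk_isDiag_iff.mpr rfl)
  have key : ∀ v : V,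
      ((v ∈ midComp A e₀ j ↔
        ((graphOf (A.erase e₀)).Reachable v y ∧ (graphOf (A.erase j)).Reachable v x)) ∧
       ¬ ((graphOf (A.erase e₀)).Reachable v x ∧ (graphOf (A.erase j)).Reachable v y)) ∨
      ((v ∈ midComp A e₀ j ↔
        ((graphOf (A.erase e₀)).Reachable v x ∧ (graphOf (A.erase j)).Reachable v y)) ∧
       ¬ ((graphOf (A.erase e₀)).Reachable v y ∧ (graphOf (A.erase j)).Reachable v x)) := by
    by_cases ht : (graphOf (A.erase j)).Reachable α₀ x
    · have ht' := t_lemma hsep₀ hsepj hxyA hne he₀A hjA h0 h1 hn0 hβ₀ hα hβ ht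
      exact fun v => Or.inl (midComp_char hacy hsep₀ hsepj hne he₀A hjA h0 h1 hn0 hnj
        hα₀ hβ₀ hα hβ ht ht' v)
    · have hα₀y : (graphOf (A.erase j)).Reachable α₀ y := by
        have hsupp₀ : α₀ ∈ supp A := mem_supp_of_edge h0 he₀A
        have := side_total_edge hsepj hxyA.symm (hconn α₀ hsupp₀ x hx)
        exact this.resolve_left ht
      have hedge₀ : (graphOf (A.erase j)).Reachable α₀ β₀ :=
        adj_reach_of_edge h0 hn0 (Finset.mem_erase.mpr ⟨hne, he₀A⟩)
      have htsw : (graphOf (A.erase j)).Reachable β₀ y := hedge₀.symm.trans hα₀y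
      have hsep₀' : ¬ (graphOf (A.erase e₀)).Reachable y x := fun h => hsep₀ h.symm
      have hsepj' : ¬ (graphOf (A.erase j)).Reachable y x := fun h => hsepj h.symm
      have h0' : e₀ = s(β₀, α₀) := by rw [h0, Sym2.eq_swap]
      have h1' : j = s(β, α) := by rw [h1, Sym2.eq_swap]
      have ht'sw := t_lemma hsep₀' hsepj' hxyA.symm hne he₀A hjA h0' h1'
        (Ne.symm hn0) hα₀ hβ hα htsw
      exact fun v => Or.inr
        ((midComp_char hacy hsep₀' hsepj' hne he₀A hjA h0' h1' (Ne.symm hn0) (Ne.symm hnj)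
          hβ₀ hα₀ hβ hα htsw ht'sw v).imp (fun h => by tauto) id)
  intro v hv
  have d0 := side_total_edge hsep₀ hxyA.symm (hconn v hv x hx)
  have dj := side_total_edge hsepj hxyA.symm (hconn v hv x hx)
  have nb0 : ¬ ((graphOf (A.erase e₀)).Reachable v x ∧ (graphOf (A.erase e₀)).Reachable v y) :=
    fun h => hsep₀ (h.1.symm.trans h.2)
  have nbj : ¬ ((graphOf (A.erase j)).Reachable v x ∧ (graphOf (A.erase j)).Reachable v y) :=
    fun h => hsepj (h.1.symm.trans h.2)
  rcases key v with ⟨hiff, hnot⟩ | ⟨hiff, hnot⟩ <;> rw [hiff] <;> tauto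
lemma sdiff_subset_erase {A S : Finset (Sym2 V)} {e : Sym2 V} (he : e ∈ S) :
    A \ S ⊆ A.erase e := by
  intro g hg
  rw [Finset.mem_sdiff] at hg
  rw [Finset.mem_erase]
  exact ⟨fun hq => hg.2 (hq ▸ he), hg.1⟩

lemma inner_structure {A S : Finset (Sym2 V)} {x y u : V}
    (hacy : (graphOf A).IsAcyclic) (hnd : ∀ e ∈ A, ¬ e.IsDiag)
    (hconn : ∀ u ∈ supp A, ∀ v ∈ supp A, (graphOf A).Reachable u v)
    (hSA : S ⊆ A)
    (hsep : ∀ j ∈ S, ¬ (graphOf (A.erase j)).Reachable x y)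
    (hx : x ∈ supp A) (hy : y ∈ supp A) (hu : u ∈ supp A)
    (hux : ¬ (graphOf (A \ S)).Reachable u x) (huy : ¬ (graphOf (A \ S)).Reachable u y) :
    ∃ e ∈ S, ∃ e' ∈ S, ∃ a b a' b' : V, e = s(a, b) ∧ e' = s(a', b') ∧ e ≠ e' ∧
      (graphOf (A \ S)).Reachable u a ∧ (graphOf (A.erase e)).Reachable b x ∧
      (graphOf (A \ S)).Reachable u a' ∧ (graphOf (A.erase e')).Reachable b' y := by
  obtain ⟨e, he, a, b, hab, h1, h2⟩ := exists_cross (hconn u hu x hx) hux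
  obtain ⟨e', he', a', b', hab', h1', h2'⟩ := exists_cross (hconn u hu y hy) huy
  refine ⟨e, he, e', he', a, b, a', b', hab, hab', ?_, h1, h2, h1', h2'⟩
  rintro rfl
  have heq := hab.symm.trans hab'
  rw [Sym2.eq_iff] at heq
  rcases heq with ⟨rfl, rfl⟩ | ⟨h3, h4⟩
  · exact hsep e he (h2.symm.trans h2')
  · rw [← h4] at h1'
    have hne : a ≠ b := by
      intro h
      exact hnd e (hSA he) (by rw [hab, h]; exact Sym2.mk_isDiag_iff.mpr rfl)
    have hr : (graphOf (A.erase e)).Reachable a b :=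
      (h1.symm.trans h1').mono (graphOf_le (sdiff_subset_erase he))
    rw [hab] at hr
    exact not_reach_erase_of_acyclic hacy (hab ▸ hSA he) hne hr

lemma cross_conflict {A : Finset (Sym2 V)} {x y : V} {e e' : Sym2 V} {a b a' b' : V}
    (hacy : (graphOf A).IsAcyclic)
    (hsep_e' : ¬ (graphOf (A.erase e')).Reachable x y)
    (heA : e ∈ A)
    (hab : e = s(a, b)) (hab' : e' = s(a', b')) (hne_ab : a ≠ b)
    (haa' : (graphOf (A \ {e, e'})).Reachable a a')
    (hb : (graphOf (A.erase e)).Reachable b x)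
    (hb' : (graphOf (A.erase e')).Reachable b' y)
    {w : V} (hwx : (graphOf (A.erase e)).Reachable w x)
    (hwy : (graphOf (A.erase e')).Reachable w y) : False := by
  have hnwx' : ¬ (graphOf (A.erase e')).Reachable w x := fun h => hsep_e' (h.symm.trans hwy)
  have hnK : ¬ (graphOf ((A.erase e) \ {e'})).Reachable w x := by
    rw [sdiff_pair_left]
    exact fun h => hnwx' (h.mono (graphOf_le sdiff_pair_subset'))
  obtain ⟨m, hm, a₂, b₂, hab₂, hw2, hb2x⟩ := exists_cross hwx hnK
  rw [Finset.mem_singleton] at hm; subst m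
  rw [sdiff_pair_left] at hw2
  rw [sdiff_pair_left'] at hb2x
  have heq := hab'.symm.trans hab₂
  rw [Sym2.eq_iff] at heq
  rcases heq with ⟨rfl, rfl⟩ | ⟨h3, h4⟩
  · exact hsep_e' ((hb2x.mono (graphOf_le sdiff_pair_subset')).symm.trans hb')
  · rw [← h3] at hb2x
    have hax : (graphOf (A.erase e)).Reachable a x :=
      ((haa'.trans hb2x).mono (graphOf_le sdiff_pair_subset))
    have hr : (graphOf (A.erase e)).Reachable a b := hax.trans hb.symm
    rw [hab] at hr
    exact not_reach_erase_of_acyclic hacy (hab ▸ heA) hne_ab hr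
set_option maxHeartbeats 3000000 in
lemma confine {A S F : Finset (Sym2 V)} {x y : V} {e₀ : Sym2 V}
    (hacy : (graphOf A).IsAcyclic) (hnd : ∀ e ∈ A, ¬ e.IsDiag)
    (hconn : ∀ u ∈ supp A, ∀ v ∈ supp A, (graphOf A).Reachable u v)
    (hSA : S ⊆ A)
    (hsep : ∀ j ∈ S, ¬ (graphOf (A.erase j)).Reachable x y)
    (hxyA : (graphOf A).Reachable x y)
    (hx : x ∈ supp A) (hy : y ∈ supp A)
    (he₀ : e₀ ∈ S)
    (hcompat : ∀ j ∈ S, j ≠ e₀ → ∀ p q : V, s(p, q) ∈ F →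
        (p ∈ midComp A e₀ j ↔ q ∈ midComp A e₀ j))
    {p q : V} (hpA : p ∈ supp A) (hqA : q ∈ supp A)
    (hpx : ¬ (graphOf (A \ S)).Reachable p x) (hpy : ¬ (graphOf (A \ S)).Reachable p y)
    (hgF : s(p, q) ∈ F) :
    (graphOf (A \ S)).Reachable p q := by
  by_contra hn
  obtain ⟨e, he, e', he', a, b, a', b', hab, hab', hee', h1, h2, h1', h2'⟩ :=
    inner_structure hacy hnd hconn hSA hsep hx hy hpA hpx hpy
  obtain ⟨j, hj, a2, b2, habj, hpj, hbj⟩ := exists_cross (hconn p hpA q hqA) hn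
  have yside : ∀ k ∈ S, ∀ v ∈ supp A,
      ((graphOf (A.erase k)).Reachable v y ↔ ¬ (graphOf (A.erase k)).Reachable v x) := by
    intro k hk v hv
    constructor
    · exact fun hvy hvx => hsep k hk (hvx.symm.trans hvy)
    · intro hnx
      exact (side_total_edge (hsep k hk) hxyA.symm (hconn v hv x hx)).resolve_left hnx
  have hne_ab : a ≠ b := fun h =>
    hnd e (hSA he) (by rw [hab, h]; exact Sym2.mk_isDiag_iff.mpr rfl)
  have hne_ab' : a' ≠ b' := fun h =>
    hnd e' (hSA he') (by rw [hab', h]; exact Sym2.mk_isDiag_iff.mpr rfl)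
  have hne_j : a2 ≠ b2 := fun h =>
    hnd j (hSA hj) (by rw [habj, h]; exact Sym2.mk_isDiag_iff.mpr rfl)
  have hbr_e : ¬ (graphOf (A.erase e)).Reachable a b := by
    have := not_reach_erase_of_acyclic hacy (hab ▸ hSA he) hne_ab
    rw [← hab] at this; exact this
  have hbr_e' : ¬ (graphOf (A.erase e')).Reachable a' b' := by
    have := not_reach_erase_of_acyclic hacy (hab' ▸ hSA he') hne_ab'
    rw [← hab'] at this; exact this
  have hbr_j : ¬ (graphOf (A.erase j)).Reachable a2 b2 := by
    have := not_reach_erase_of_acyclic hacy (habj ▸ hSA hj) hne_j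
    rw [← habj] at this; exact this
  -- p's sides
  have hpa_e : (graphOf (A.erase e)).Reachable p a :=
    h1.mono (graphOf_le (sdiff_subset_erase he))
  have hPe : ¬ (graphOf (A.erase e)).Reachable p x :=
    fun h => hbr_e ((hpa_e.symm.trans h).trans h2.symm)
  have hpa_e' : (graphOf (A.erase e')).Reachable p a' :=
    h1'.mono (graphOf_le (sdiff_subset_erase he'))
  have hPe' : (graphOf (A.erase e')).Reachable p x := by
    have hnpy : ¬ (graphOf (A.erase e')).Reachable p y :=
      fun h => hbr_e' ((hpa_e'.symm.trans h).trans h2'.symm)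
    exact (side_total_edge (hsep e' he') hxyA.symm (hconn p hpA x hx)).resolve_right hnpy
  -- p and q on different sides of j
  have hqb2 : (graphOf (A.erase j)).Reachable q b2 := hbj.symm
  have hpa2 : (graphOf (A.erase j)).Reachable p a2 :=
    hpj.mono (graphOf_le (sdiff_subset_erase hj))
  have hXj : ¬ ((graphOf (A.erase j)).Reachable p x ↔ (graphOf (A.erase j)).Reachable q x) := by
    intro hiff
    rcases side_total_edge (hsep j hj) hxyA.symm (hconn p hpA x hx) with hpxj | hpyj
    · exact hbr_j ((hpa2.symm.trans hpxj).trans (hqb2.symm.trans (hiff.mp hpxj)).symm)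
    · have hqnx : ¬ (graphOf (A.erase j)).Reachable q x :=
        fun hq => (yside j hj p hpA).mp hpyj (hiff.mpr hq)
      have hqyj := (yside j hj q hqA).mpr hqnx
      exact hbr_j ((hpa2.symm.trans hpyj).trans (hqb2.symm.trans hqyj).symm)
  -- compatibility in xor form
  have hXOR : ∀ k ∈ S, k ≠ e₀ →
      (¬ ((graphOf (A.erase e₀)).Reachable p x ↔ (graphOf (A.erase k)).Reachable p x) ↔
       ¬ ((graphOf (A.erase e₀)).Reachable q x ↔ (graphOf (A.erase k)).Reachable q x)) := by
    intro k hk hkne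
    have hmx := midComp_xor hacy hnd hconn (hsep e₀ he₀) (hsep k hk) hxyA
      (Ne.symm hkne) (hSA he₀) (hSA hk) hx
    have hp' := hmx p hpA
    have hq' := hmx q hqA
    have hcq := hcompat k hk hkne p q hgF
    have y0p := yside e₀ he₀ p hpA
    have y0q := yside e₀ he₀ q hqA
    have ykp := yside k hk p hpA
    have ykq := yside k hk q hqA
    rw [y0p, ykp] at hp'
    rw [y0q, ykq] at hq'
    rw [hp', hq'] at hcq
    clear * - hcq
    revert hcq
    generalize (graphOf (A.erase e₀)).Reachable p x = A1
    generalize (graphOf (A.erase e₀)).Reachable q x = A2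
    generalize (graphOf (A.erase k)).Reachable p x = A3
    generalize (graphOf (A.erase k)).Reachable q x = A4
    intro hcq
    tauto
  -- T7 consequence at q
  have hT7 : ¬ ((graphOf (A.erase e)).Reachable q x ∧
      ¬ (graphOf (A.erase e')).Reachable q x) := by
    rintro ⟨hq1, hq2⟩
    have haa' : (graphOf (A \ {e, e'})).Reachable a a' := by
      refine (h1.symm.trans h1').mono (graphOf_le ?_)
      intro g hg
      rw [Finset.mem_sdiff] at hg ⊢
      simp only [Finset.mem_insert, Finset.mem_singleton]
      refine ⟨hg.1, fun h => hg.2 ?_⟩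
      rcases h with rfl | rfl
      exacts [he, he']
    exact cross_conflict hacy (hsep e' he') (hSA he) hab hab' hne_ab haa' h2 h2'
      hq1 ((yside e' he' q hqA).mpr hq2)
  by_cases h0e : e = e₀
  · rw [h0e] at hPe hT7
    have hXe' := hXOR e' he' (fun hq => hee' (h0e.trans hq.symm))
    by_cases h0j : j = e₀
    · rw [h0j] at hXj
      clear * - hPe hPe' hXj hT7 hXe'
      revert hPe hPe' hXj hT7 hXe'
      generalize (graphOf (A.erase e₀)).Reachable p x = A1
      generalize (graphOf (A.erase e₀)).Reachable q x = A2
      generalize (graphOf (A.erase e')).Reachable p x = A3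
      generalize (graphOf (A.erase e')).Reachable q x = A4
      intros; tauto
    · have hXjX := hXOR j hj h0j
      clear * - hPe hPe' hXj hT7 hXe' hXjX
      revert hPe hPe' hXj hT7 hXe' hXjX
      generalize (graphOf (A.erase e₀)).Reachable p x = A1
      generalize (graphOf (A.erase e₀)).Reachable q x = A2
      generalize (graphOf (A.erase e')).Reachable p x = A3
      generalize (graphOf (A.erase e')).Reachable q x = A4
      generalize (graphOf (A.erase j)).Reachable p x = A5
      generalize (graphOf (A.erase j)).Reachable q x = A6
      intros; tauto
  · have hXe := hXOR e he h0e
    by_cases h0e' : e' = e₀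
    · rw [h0e'] at hPe' hT7
      by_cases h0j : j = e₀
      · rw [h0j] at hXj
        clear * - hPe hPe' hXj hT7 hXe
        revert hPe hPe' hXj hT7 hXe
        generalize (graphOf (A.erase e₀)).Reachable p x = A1
        generalize (graphOf (A.erase e₀)).Reachable q x = A2
        generalize (graphOf (A.erase e)).Reachable p x = A3
        generalize (graphOf (A.erase e)).Reachable q x = A4
        intros; tauto
      · have hXjX := hXOR j hj h0j
        clear * - hPe hPe' hXj hT7 hXe hXjX
        revert hPe hPe' hXj hT7 hXe hXjX
        generalize (graphOf (A.erase e₀)).Reachable p x = A1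
        generalize (graphOf (A.erase e₀)).Reachable q x = A2
        generalize (graphOf (A.erase e)).Reachable p x = A3
        generalize (graphOf (A.erase e)).Reachable q x = A4
        generalize (graphOf (A.erase j)).Reachable p x = A5
        generalize (graphOf (A.erase j)).Reachable q x = A6
        intros; tauto
    · have hXe' := hXOR e' he' h0e'
      by_cases h0j : j = e₀
      · rw [h0j] at hXj
        clear * - hPe hPe' hXj hT7 hXe hXe'
        revert hPe hPe' hXj hT7 hXe hXe'
        generalize (graphOf (A.erase e₀)).Reachable p x = A1
        generalize (graphOf (A.erase e₀)).Reachable q x = A2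
        generalize (graphOf (A.erase e)).Reachable p x = A3
        generalize (graphOf (A.erase e)).Reachable q x = A4
        generalize (graphOf (A.erase e')).Reachable p x = A5
        generalize (graphOf (A.erase e')).Reachable q x = A6
        intros; tauto
      · have hXjX := hXOR j hj h0j
        clear * - hPe hPe' hXj hT7 hXe hXe' hXjX
        revert hPe hPe' hXj hT7 hXe hXe' hXjX
        generalize (graphOf (A.erase e₀)).Reachable p x = A1
        generalize (graphOf (A.erase e₀)).Reachable q x = A2
        generalize (graphOf (A.erase e)).Reachable p x = A3
        generalize (graphOf (A.erase e)).Reachable q x = A4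
        generalize (graphOf (A.erase e')).Reachable p x = A5
        generalize (graphOf (A.erase e')).Reachable q x = A6
        generalize (graphOf (A.erase j)).Reachable p x = A7
        generalize (graphOf (A.erase j)).Reachable q x = A8
        intros; tauto
lemma mem_supp_of_reach_ne {A : Finset (Sym2 V)} {u v : V}
    (h : (graphOf A).Reachable u v) (hne : u ≠ v) : u ∈ supp A := by
  obtain ⟨w⟩ := h
  cases w with
  | nil => exact absurd rfl hne
  | cons hadj p => exact ⟨_, hadj.2, Sym2.mem_mk_left _ _⟩

lemma confine_walk {A S F : Finset (Sym2 V)} {x y : V} {e₀ : Sym2 V}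
    (hacy : (graphOf A).IsAcyclic) (hnd : ∀ e ∈ A, ¬ e.IsDiag)
    (hconn : ∀ u ∈ supp A, ∀ v ∈ supp A, (graphOf A).Reachable u v)
    (hSA : S ⊆ A)
    (hsep : ∀ j ∈ S, ¬ (graphOf (A.erase j)).Reachable x y)
    (hxyA : (graphOf A).Reachable x y)
    (hx : x ∈ supp A) (hy : y ∈ supp A)
    (he₀ : e₀ ∈ S)
    (hcompat : ∀ j ∈ S, j ≠ e₀ → ∀ p q : V, s(p, q) ∈ F →
        (p ∈ midComp A e₀ j ↔ q ∈ midComp A e₀ j))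
    (hsuppAF : supp A = supp F)
    {u : V} (huA : u ∈ supp A)
    (hux : ¬ (graphOf (A \ S)).Reachable u x) (huy : ¬ (graphOf (A \ S)).Reachable u y) :
    ∀ {v : V}, (graphOf F).Reachable u v → (graphOf (A \ S)).Reachable u v := by
  have step : ∀ c1 c2 : V, (graphOf F).Adj c1 c2 →
      (graphOf (A \ S)).Reachable u c1 → (graphOf (A \ S)).Reachable u c2 := by
    intro c1 c2 hadj huc
    have hc1A : c1 ∈ supp A := by
      rw [hsuppAF]; exact ⟨s(c1, c2), hadj.2, Sym2.mem_mk_left _ _⟩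
    have hc2A : c2 ∈ supp A := by
      rw [hsuppAF]; exact ⟨s(c1, c2), hadj.2, Sym2.mem_mk_right _ _⟩
    have hc1x : ¬ (graphOf (A \ S)).Reachable c1 x := fun h => hux (huc.trans h)
    have hc1y : ¬ (graphOf (A \ S)).Reachable c1 y := fun h => huy (huc.trans h)
    exact huc.trans (confine hacy hnd hconn hSA hsep hxyA hx hy he₀ hcompat
      hc1A hc2A hc1x hc1y hadj.2)
  have main : ∀ (c v : V) (w : (graphOf F).Walk c v),
      (graphOf (A \ S)).Reachable u c → (graphOf (A \ S)).Reachable u v := by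
    intro c v w
    induction w with
    | nil => exact id
    | cons hadj p ih => exact fun huc => ih (step _ _ hadj huc)
  exact fun {v} hr => hr.elim (fun w => main u v w (.refl u))

lemma feasibility_swap {A S F : Finset (Sym2 V)} {T : Finset (V × V)} {f : Sym2 V} {x y : V}
    {e₀ : Sym2 V}
    (hacy : (graphOf A).IsAcyclic) (hnd : ∀ e ∈ A, ¬ e.IsDiag)
    (hconn : ∀ u ∈ supp A, ∀ v ∈ supp A, (graphOf A).Reachable u v)
    (hSA : S ⊆ A)
    (hsep : ∀ j ∈ S, ¬ (graphOf (A.erase j)).Reachable x y)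
    (hxyA : (graphOf A).Reachable x y)
    (hx : x ∈ supp A) (hy : y ∈ supp A)
    (he₀ : e₀ ∈ S)
    (hcompat : ∀ j ∈ S, j ≠ e₀ → ∀ p q : V, s(p, q) ∈ F →
        (p ∈ midComp A e₀ j ↔ q ∈ midComp A e₀ j))
    (hsuppAF : supp A = supp F)
    (hfxy : f = s(x, y)) (hxny : x ≠ y)
    (hAfeas : Feasible A T) (hFfeas : Feasible F T) :
    Feasible ((A \ S) ∪ {f}) T := by
  intro pr hpr
  have hAr := hAfeas pr hpr
  have hFr := hFfeas pr hpr
  by_cases huv : pr.1 = pr.2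
  · rw [huv]
  have hliftH : graphOf (A \ S) ≤ graphOf ((A \ S) ∪ {f}) :=
    graphOf_le Finset.subset_union_left
  have hcxy : (graphOf ((A \ S) ∪ {f})).Reachable x y :=
    SimpleGraph.Adj.reachable
      ⟨hxny, Finset.mem_union_right _ (by rw [← hfxy]; exact Finset.mem_singleton_self f)⟩
  have huA : pr.1 ∈ supp A := mem_supp_of_reach_ne hAr huv
  have hvA : pr.2 ∈ supp A := mem_supp_of_reach_ne hAr.symm (Ne.symm huv)
  by_cases hu1 : (graphOf (A \ S)).Reachable pr.1 x ∨ (graphOf (A \ S)).Reachable pr.1 y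
  · by_cases hv1 : (graphOf (A \ S)).Reachable pr.2 x ∨ (graphOf (A \ S)).Reachable pr.2 y
    · rcases hu1 with h | h <;> rcases hv1 with h' | h'
      · exact (h.mono hliftH).trans (h'.mono hliftH).symm
      · exact ((h.mono hliftH).trans hcxy).trans (h'.mono hliftH).symm
      · exact ((h.mono hliftH).trans hcxy.symm).trans (h'.mono hliftH).symm
      · exact (h.mono hliftH).trans (h'.mono hliftH).symm
    · push_neg at hv1
      have := confine_walk hacy hnd hconn hSA hsep hxyA hx hy he₀ hcompat hsuppAF
        hvA hv1.1 hv1.2 hFr.symm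
      exact (this.mono hliftH).symm
  · push_neg at hu1
    exact (confine_walk hacy hnd hconn hSA hsep hxyA hx hy he₀ hcompat hsuppAF
      huA hu1.1 hu1.2 hFr).mono hliftH
lemma wdist_nonneg {Eall : Finset (Sym2 V)} {d : Sym2 V → ℝ} (hd : ∀ e, 0 ≤ d e)
    (u v : V) : 0 ≤ wdist Eall d u v := by
  refine Real.iInf_nonneg ?_
  intro p
  refine List.sum_nonneg ?_
  intro z hz
  obtain ⟨e, _, rfl⟩ := List.mem_map.mp hz
  exact hd e

lemma wdist_self {Eall : Finset (Sym2 V)} {d : Sym2 V → ℝ} (hd : ∀ e, 0 ≤ d e)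
    (u : V) : wdist Eall d u u = 0 := by
  refine le_antisymm ?_ (wdist_nonneg hd u u)
  have hb : BddBelow (Set.range fun p : (graphOf Eall).Walk u u => (p.edges.map d).sum) := by
    refine ⟨0, ?_⟩
    rintro z ⟨p, rfl⟩
    refine List.sum_nonneg ?_
    intro w hw
    obtain ⟨e, _, rfl⟩ := List.mem_map.mp hw
    exact hd e
  have := ciInf_le hb (SimpleGraph.Walk.nil : (graphOf Eall).Walk u u)
  simpa [wdist] using this

lemma widthSet_bddAbove (Eall : Finset (Sym2 V)) (d : Sym2 V → ℝ) (T : Finset (V × V))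
    (W : Set V) :
    BddAbove {x : ℝ | ∃ p ∈ T, p.1 ∈ W ∧ p.2 ∈ W ∧ x = wdist Eall d p.1 p.2} := by
  refine BddAbove.mono ?_ (((T : Set (V × V)).toFinite.image
    (fun p => wdist Eall d p.1 p.2)).bddAbove)
  rintro z ⟨p, hp, _, _, rfl⟩
  exact ⟨p, hp, rfl⟩

lemma widthSet_nonneg {Eall : Finset (Sym2 V)} {d : Sym2 V → ℝ} (hd : ∀ e, 0 ≤ d e)
    (T : Finset (V × V)) (W : Set V) : 0 ≤ widthSet Eall d T W := by
  refine Real.sSup_nonneg ?_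
  rintro z ⟨p, _, _, _, rfl⟩
  exact wdist_nonneg hd _ _

lemma widthSet_mono {Eall : Finset (Sym2 V)} {d : Sym2 V → ℝ} (hd : ∀ e, 0 ≤ d e)
    (T : Finset (V × V)) {W W' : Set V} (h : W ⊆ W') :
    widthSet Eall d T W ≤ widthSet Eall d T W' := by
  rw [widthSet, widthSet]
  by_cases hne : {x : ℝ | ∃ p ∈ T, p.1 ∈ W ∧ p.2 ∈ W ∧ x = wdist Eall d p.1 p.2}.Nonempty
  · refine csSup_le_csSup (widthSet_bddAbove Eall d T W') hne ?_
    rintro z ⟨p, hp, h1, h2, rfl⟩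
    exact ⟨p, hp, h h1, h h2, rfl⟩
  · rw [Set.not_nonempty_iff_eq_empty] at hne
    rw [hne, Real.sSup_empty]
    exact widthSet_nonneg hd T W'

lemma widthSet_singleton {Eall : Finset (Sym2 V)} {d : Sym2 V → ℝ} (hd : ∀ e, 0 ≤ d e)
    (T : Finset (V × V)) (u : V) : widthSet Eall d T {u} = 0 := by
  refine le_antisymm ?_ (widthSet_nonneg hd T _)
  refine Real.sSup_le ?_ le_rfl
  rintro z ⟨p, _, h1, h2, rfl⟩
  rw [Set.mem_singleton_iff] at h1 h2
  rw [h1, h2, wdist_self hd]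

lemma comp_eq_of_supp_eq {G : SimpleGraph V} {c₁ c₂ : G.ConnectedComponent}
    (h : c₁.supp = c₂.supp) : c₁ = c₂ := by
  obtain ⟨v, hv'⟩ := c₁.exists_rep
  have hv : G.connectedComponentMk v = c₁ := hv'
  have h1 : v ∈ c₁.supp := by
    rw [SimpleGraph.ConnectedComponent.mem_supp_iff]
    exact hv
  rw [h, SimpleGraph.ConnectedComponent.mem_supp_iff] at h1
  rw [← h1, ← hv]

noncomputable instance compFintype (G : SimpleGraph V) : Fintype G.ConnectedComponent := by
  have : Finite G.ConnectedComponent :=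
    Finite.of_surjective G.connectedComponentMk (fun c => c.exists_rep)
  exact Fintype.ofFinite _

lemma comp_width_le_totalWidth {Eall : Finset (Sym2 V)} {d : Sym2 V → ℝ} (hd : ∀ e, 0 ≤ d e)
    (T : Finset (V × V)) (B : Finset (Sym2 V)) (c : (graphOf B).ConnectedComponent) :
    widthSet Eall d T c.supp ≤ totalWidth Eall d T B := by
  rw [totalWidth, finsum_eq_sum_of_fintype]
  exact Finset.single_le_sum (fun i _ => widthSet_nonneg hd T _) (Finset.mem_univ c)
lemma totalWidth_swap_le {Eall : Finset (Sym2 V)} {d : Sym2 V → ℝ} (hd : ∀ e, 0 ≤ d e)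
    (T : Finset (V × V)) {A S : Finset (Sym2 V)} {f : Sym2 V} {x y : V}
    (hacy : (graphOf A).IsAcyclic) (hnd : ∀ e ∈ A, ¬ e.IsDiag)
    (hconn : ∀ u ∈ supp A, ∀ v ∈ supp A, (graphOf A).Reachable u v)
    (hSA : S ⊆ A)
    (hsep : ∀ j ∈ S, ¬ (graphOf (A.erase j)).Reachable x y)
    (hxyA : (graphOf A).Reachable x y)
    (hx : x ∈ supp A) (hy : y ∈ supp A)
    (hfxy : f = s(x, y)) (hxny : x ≠ y) :
    totalWidth Eall d T ((A \ S) ∪ {f}) ≤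
      widthSet Eall d T ((graphOf A).connectedComponentMk x).supp +
        innerWidthSum Eall d T A S := by
  have R1 : ∀ u v : V, (graphOf ((A \ S) ∪ {f})).Reachable u v → (graphOf A).Reachable u v := by
    intro u v h
    refine reach_of_adj_reach ?_ h
    intro a b hab
    rcases Finset.mem_union.mp hab.2 with h' | h'
    · exact SimpleGraph.Adj.reachable ⟨hab.1, (Finset.mem_sdiff.mp h').1⟩
    · rw [Finset.mem_singleton] at h'
      have heq : s(a, b) = s(x, y) := h'.trans hfxy
      rw [Sym2.eq_iff] at heq
      rcases heq with ⟨rfl, rfl⟩ | ⟨rfl, rfl⟩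
      · exact hxyA
      · exact hxyA.symm
  have hadjxy : (graphOf ((A \ S) ∪ {f})).Adj x y :=
    ⟨hxny, Finset.mem_union_right _ (by rw [← hfxy]; exact Finset.mem_singleton_self f)⟩
  set CX := (graphOf ((A \ S) ∪ {f})).connectedComponentMk x with hCX
  have hyCX : (graphOf ((A \ S) ∪ {f})).connectedComponentMk y = CX :=
    SimpleGraph.ConnectedComponent.eq.mpr hadjxy.reachable.symm
  have hGH : ∀ u : V, ¬ (graphOf ((A \ S) ∪ {f})).Reachable u x →
      ∀ v : V, (graphOf ((A \ S) ∪ {f})).Reachable u v → (graphOf (A \ S)).Reachable u v := by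
    intro u hux v h
    obtain ⟨w⟩ := h
    by_cases hw : f ∈ w.edges
    · exfalso
      apply hux
      have hw' : s(x, y) ∈ w.edges := by rw [← hfxy]; exact hw
      have hxs : x ∈ w.support := w.fst_mem_support_of_mem_edges hw' 
      exact ⟨w.takeUntil x hxs⟩
    · refine ⟨w.transfer _ ?_⟩
      intro g hg
      have hg' := w.edges_subset_edgeSet hg
      rw [mem_edgeSet_graphOf] at hg' ⊢
      rcases Finset.mem_union.mp hg'.2 with h' | h'
      · exact ⟨hg'.1, h'⟩
      · rw [Finset.mem_singleton] at h'
        exact absurd (h' ▸ hg) hw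
  have key : ∀ c' : (graphOf ((A \ S) ∪ {f})).ConnectedComponent,
      ∃ c : (graphOf (A \ S)).ConnectedComponent, c' ≠ CX →
        (c.supp = c'.supp ∧ (innerComp A S c ∨ widthSet Eall d T c'.supp = 0)) := by
    intro c'
    by_cases hcne : c' = CX
    · exact ⟨(graphOf (A \ S)).connectedComponentMk x, fun h => absurd hcne h⟩
    obtain ⟨u, hu'⟩ := c'.exists_rep
    have hu : (graphOf ((A \ S) ∪ {f})).connectedComponentMk u = c' := hu'
    have hux : ¬ (graphOf ((A \ S) ∪ {f})).Reachable u x := fun h =>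
      hcne (hu.symm.trans (SimpleGraph.ConnectedComponent.eq.mpr h))
    have huy : ¬ (graphOf ((A \ S) ∪ {f})).Reachable u y := fun h =>
      hcne (hu.symm.trans ((SimpleGraph.ConnectedComponent.eq.mpr h).trans hyCX))
    have hsupp_eq : ((graphOf (A \ S)).connectedComponentMk u).supp = c'.supp := by
      ext v
      rw [SimpleGraph.ConnectedComponent.mem_supp_iff,
        SimpleGraph.ConnectedComponent.mem_supp_iff, ← hu,
        SimpleGraph.ConnectedComponent.eq, SimpleGraph.ConnectedComponent.eq]
      constructor
      · exact fun h => h.mono (graphOf_le Finset.subset_union_left)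
      · exact fun h => (hGH u hux v h.symm).symm
    by_cases huA : u ∈ supp A
    · refine ⟨_, fun _ => ⟨hsupp_eq, Or.inl ?_⟩⟩
      have hux' : ¬ (graphOf (A \ S)).Reachable u x := fun h =>
        hux (h.mono (graphOf_le Finset.subset_union_left))
      have huy' : ¬ (graphOf (A \ S)).Reachable u y := fun h =>
        huy (h.mono (graphOf_le Finset.subset_union_left))
      obtain ⟨e, he, e', he', a, b, a', b', hab, hab', hee', h1, h2, h1', h2'⟩ :=
        inner_structure hacy hnd hconn hSA hsep hx hy huA hux' huy'
      refine ⟨e, he, e', he', hee', ⟨a, ?_, ?_⟩, ⟨a', ?_, ?_⟩⟩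
      · rw [hab]; exact Sym2.mem_mk_left _ _
      · exact SimpleGraph.ConnectedComponent.eq.mpr h1.symm
      · rw [hab']; exact Sym2.mem_mk_left _ _
      · exact SimpleGraph.ConnectedComponent.eq.mpr h1'.symm
    · refine ⟨(graphOf (A \ S)).connectedComponentMk u, fun _ => ⟨hsupp_eq, Or.inr ?_⟩⟩
      have hsingle : c'.supp = {u} := by
        ext v
        rw [SimpleGraph.ConnectedComponent.mem_supp_iff, ← hu,
          SimpleGraph.ConnectedComponent.eq, Set.mem_singleton_iff]
        constructor
        · intro h
          by_contra hne
          have hvu : u ∈ supp ((A \ S) ∪ {f}) :=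
            mem_supp_of_reach_ne h.symm (fun hh => hne hh.symm)
          obtain ⟨g, hg, hug⟩ := hvu
          rcases Finset.mem_union.mp hg with h' | h'
          · exact huA ⟨g, (Finset.mem_sdiff.mp h').1, hug⟩
          · rw [Finset.mem_singleton] at h'
            subst h'
            rw [hfxy, Sym2.mem_iff] at hug
            rcases hug with rfl | rfl
            · exact hux (.refl _)
            · exact huy (.refl _)
        · rintro rfl; exact .refl _
      rw [hsingle, widthSet_singleton hd]
  choose m hm using key
  rw [totalWidth, innerWidthSum, finsum_eq_sum_of_fintype, finsum_eq_sum_of_fintype]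
  rw [← Finset.add_sum_erase _ _ (Finset.mem_univ CX)]
  refine add_le_add ?_ ?_
  · refine widthSet_mono hd T ?_
    intro v hv
    rw [SimpleGraph.ConnectedComponent.mem_supp_iff] at hv ⊢
    rw [SimpleGraph.ConnectedComponent.eq] at hv ⊢
    exact R1 _ _ hv
  · have hstep : ∀ c' ∈ Finset.univ.erase CX, widthSet Eall d T c'.supp =
        (fun c => if innerComp A S c then widthSet Eall d T c.supp else 0) (m c') := by
      intro c' hc'
      have h := hm c' (Finset.ne_of_mem_erase hc')
      by_cases hI : innerComp A S (m c')
      · simp only [hI, if_true]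
        rw [h.1]
      · simp only [hI, if_false]
        exact h.2.resolve_left hI
    rw [Finset.sum_congr rfl hstep]
    have hinj : ∀ c1 ∈ Finset.univ.erase CX, ∀ c2 ∈ Finset.univ.erase CX,
        m c1 = m c2 → c1 = c2 := by
      intro c1 hc1 c2 hc2 hEq
      have h1 := (hm c1 (Finset.ne_of_mem_erase hc1)).1
      have h2 := (hm c2 (Finset.ne_of_mem_erase hc2)).1
      refine comp_eq_of_supp_eq ?_
      rw [← h1, hEq, h2]
    refine le_trans (le_of_eq (Finset.sum_image (f := fun c => if innerComp A S c then widthSet Eall d T c.supp else 0) hinj).symm) ?_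
    refine Finset.sum_le_sum_of_subset_of_nonneg (Finset.subset_univ _) ?_
    intro c _ _
    split
    · exact widthSet_nonneg hd T _
    · exact le_rfl
theorem stmt9_swap_with_three_pieces
    (Eall : Finset (Sym2 V)) (d : Sym2 V → ℝ) (hd : ∀ e, 0 ≤ d e)
    (T : Finset (V × V)) (A F : Finset (Sym2 V))
    (hAE : A ⊆ Eall) (hFE : F ⊆ Eall)
    (hAfeas : Feasible A T) (hFfeas : Feasible F T)
    (hAtree : IsTreeSol A) (hsupp : supp A = supp F)
    (hes : EdgeSetSwapOptimal F T (phi Eall d T) A)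
    (e₀ : Sym2 V) (he₀ : e₀ ∈ A)
    (S : Finset (Sym2 V)) (hS : S = cls A F e₀) (hSu : S ≠ unsafeCls A F)
    (f : Sym2 V) (hf : f ∈ F) (hcyc : ∀ e ∈ S, onFundCycle A f e) :
    (1 / 3) * ((∑ e ∈ S, d e) - innerWidthSum Eall d T A S) ≤ d f := by
  obtain ⟨hnd, hacy, hconn⟩ := hAtree
  obtain ⟨x, y, hfxy⟩ : ∃ a b : V, f = s(a, b) := by
    induction f using Sym2.ind with
    | _ a b => exact ⟨a, b, rfl⟩
  have he₀S : e₀ ∈ S := by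
    rw [hS]
    exact Finset.mem_filter.mpr ⟨he₀, Or.inl rfl⟩
  have hSA : S ⊆ A := by rw [hS]; exact Finset.filter_subset _ _
  have hsep : ∀ j ∈ S, ¬ (graphOf (A.erase j)).Reachable x y :=
    fun j hj => ((hcyc j hj).2 x y hfxy).2
  have hxyA : (graphOf A).Reachable x y := ((hcyc e₀ he₀S).2 x y hfxy).1
  have hxny : x ≠ y := by
    rintro rfl
    exact hsep e₀ he₀S (.refl x)
  have hxsupp : x ∈ supp A := by
    rw [hsupp]
    exact ⟨f, hf, by rw [hfxy]; exact Sym2.mem_mk_left _ _⟩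
  have hysupp : y ∈ supp A := by
    rw [hsupp]
    exact ⟨f, hf, by rw [hfxy]; exact Sym2.mem_mk_right _ _⟩
  have hcompat : ∀ j ∈ S, j ≠ e₀ → ∀ p q : V, s(p, q) ∈ F →
      (p ∈ midComp A e₀ j ↔ q ∈ midComp A e₀ j) := by
    intro j hj hne p q hpq
    have hcj : Compatible A F e₀ j := by
      rw [hS] at hj
      exact (Finset.mem_filter.mp hj).2
    rcases hcj with h | h
    · exact absurd h.symm hne
    constructor
    · intro hp
      by_contra hq
      exact h ⟨s(p, q), hpq, p, q, rfl, hp, hq⟩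
    · intro hq
      by_contra hp
      exact h ⟨s(p, q), hpq, q, p, Sym2.eq_swap, hq, hp⟩
  have hfeas' : Feasible ((A \ S) ∪ {f}) T :=
    feasibility_swap hacy hnd hconn hSA hsep hxyA hxsupp hysupp he₀S hcompat hsupp
      hfxy hxny hAfeas hFfeas
  have key : phi Eall d T A ≤ phi Eall d T ((A \ S) ∪ {f}) := hes f hf S hSA hcyc hfeas'
  have hsd : (∑ e ∈ A \ S, d e) = (∑ e ∈ A, d e) - ∑ e ∈ S, d e := by
    have := Finset.sum_sdiff (f := d) hSA
    linarith
  have hcost : cost d ((A \ S) ∪ {f}) ≤ cost d A - (∑ e ∈ S, d e) + d f := by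
    by_cases hfA : f ∈ A \ S
    · rw [cost, Finset.union_eq_left.mpr (Finset.singleton_subset_iff.mpr hfA), hsd]
      have := hd f
      rw [cost]
      linarith
    · rw [cost, Finset.sum_union (Finset.disjoint_singleton_right.mpr hfA),
        Finset.sum_singleton, hsd, cost]
  have hw1 := totalWidth_swap_le (Eall := Eall) hd T hacy hnd hconn hSA hsep hxyA
    hxsupp hysupp hfxy hxny
  have hw2 := comp_width_le_totalWidth (Eall := Eall) hd T A
    ((graphOf A).connectedComponentMk x)
  rw [phi, phi] at key
  have hgoal : (∑ e ∈ S, d e) - innerWidthSum Eall d T A S ≤ d f := by linarith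
  linarith [hd f]
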